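/- Let A ∈ ℝ^{n×n} be Metzler and Hurwitz, and let B ∈ ℝ^{n×m} be entrywise nonnegative with Bu0 entrywise strictly positive for some entrywise nonnegative u0 ∈ ℝ^m. Then for every y ∈ ℝ^n there exist an entrywise nonnegative x ∈ ℝ^n and an entrywise nonnegative u ∈ ℝ^m such that Ax + Bu = y; that is, the image of the nonnegative orthant ℝ_+^{n+m} under the map (x,u) ↦ Ax + Bu is all of ℝ^n. -/

import Mathlib

open Matrix Filter
open scoped NNReal ENNReal Topology

attribute [local instance] Matrix.linftyOpNormedAddCommGroup Matrix.linftyOpNormedRing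
  Matrix.linftyOpNormedAlgebra Matrix.linftyOpNormedSpace

noncomputable local instance matCompleteAux {p q : Type*} [Fintype p] [Fintype q] :
    CompleteSpace (Matrix p q ℂ) :=
  (inferInstance : CompleteSpace (p → q → ℂ))

private lemma nnnorm_map_ofReal {k : ℕ} (M : Matrix (Fin k) (Fin k) ℝ) :
    ‖M.map (Complex.ofReal ·)‖₊ = ‖M‖₊ := by
  simp [Matrix.linfty_opNNNorm_def, Matrix.map_apply, Complex.nnnorm_real]

private lemma pow_entry_nonneg {k : ℕ} (P : Matrix (Fin k) (Fin k) ℝ)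
    (hP : ∀ i j, 0 ≤ P i j) (N : ℕ) : ∀ i j, 0 ≤ (P ^ N) i j := by
  induction N with
  | zero => intro i j; by_cases h : i = j <;> simp [pow_zero, Matrix.one_apply, h]
  | succ N ih =>
      intro i j
      rw [pow_succ, Matrix.mul_apply]
      exact Finset.sum_nonneg fun l _ => mul_nonneg (ih i l) (hP l j)

private lemma geom_inverse {k : ℕ} (hk : 0 < k) (P : Matrix (Fin k) (Fin k) ℝ)
    (hP : ∀ i j, 0 ≤ P i j)
    (hspec : ∀ z ∈ spectrum ℂ (P.map (Complex.ofReal ·)), ‖z‖₊ < 1) :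
    ∃ Q : Matrix (Fin k) (Fin k) ℝ, (1 - P) * Q = 1 ∧ ∀ i j, 0 ≤ Q i j := by
  haveI : NeZero k := ⟨hk.ne'⟩
  set Pc : Matrix (Fin k) (Fin k) ℂ := P.map (Complex.ofReal ·) with hPc
  have hrad : spectralRadius ℂ Pc < (1 : ℝ≥0) :=
    spectrum.spectralRadius_lt_of_forall_lt (a := Pc) hspec
  obtain ⟨r, hr1, hr2⟩ := exists_between hrad
  have hrtop : r ≠ ⊤ := (hr2.trans_le le_top).ne
  set s : NNReal := r.toNNReal with hs
  have hs1 : s < 1 := by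
    have := ENNReal.toNNReal_lt_toNNReal hrtop (by simp : (1:ℝ≥0∞) ≠ ⊤)
    simpa [hs] using this.mpr hr2
  have hPcpow : ∀ N : ℕ, Pc ^ N = (P ^ N).map (Complex.ofReal ·) := by
    intro N
    have : Pc = Complex.ofRealHom.mapMatrix P := rfl
    rw [this, ← map_pow]
    rfl
  have hev : ∀ᶠ N : ℕ in atTop, ‖P ^ N‖₊ ≤ s ^ N := by
    have hlim := spectrum.limsup_pow_nnnorm_pow_one_div_le_spectralRadius Pc
    have h1 : ∀ᶠ N : ℕ in atTop, (‖Pc ^ N‖₊ : ℝ≥0∞) ^ (1 / N : ℝ) < r :=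
      Filter.eventually_lt_of_limsup_lt (lt_of_le_of_lt hlim hr1)
    filter_upwards [h1, Filter.eventually_ge_atTop 1] with N hN hN1
    have hNne : (N : ℝ) ≠ 0 := by positivity
    have h2 : ((‖Pc ^ N‖₊ : ℝ≥0∞) ^ (1 / N : ℝ)) ^ (N : ℝ) ≤ r ^ (N : ℝ) :=
      ENNReal.rpow_le_rpow hN.le (by positivity)
    rw [← ENNReal.rpow_mul, one_div, inv_mul_cancel₀ hNne, ENNReal.rpow_one] at h2
    have h3 : (‖Pc ^ N‖₊ : ℝ≥0∞) ≤ (s : ℝ≥0∞) ^ (N : ℝ) := by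
      rw [hs, ENNReal.coe_toNNReal hrtop]; exact h2
    rw [ENNReal.rpow_natCast, ← ENNReal.coe_pow, ENNReal.coe_le_coe] at h3
    rwa [hPcpow, nnnorm_map_ofReal] at h3
  have hevn : ∀ᶠ N : ℕ in atTop, ‖P ^ N‖ ≤ (s : ℝ) ^ N := by
    filter_upwards [hev] with N h
    exact_mod_cast h
  have hsum : Summable fun N : ℕ => P ^ N := by
    refine Summable.of_norm_bounded_eventually_nat
      (summable_geometric_of_lt_one s.2 ?_) hevn
    exact_mod_cast hs1
  obtain ⟨Q, hQ⟩ := hsum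
  have hpow0 : Tendsto (fun N : ℕ => P ^ N) atTop (nhds 0) := by
    refine squeeze_zero_norm' hevn ?_
    exact tendsto_pow_atTop_nhds_zero_of_lt_one s.2 (by exact_mod_cast hs1)
  refine ⟨Q, ?_, ?_⟩
  · have h1 : HasSum (fun N : ℕ => (1 - P) * P ^ N) ((1 - P) * Q) := hQ.mul_left _
    have h2 := h1.tendsto_sum_nat
    have h3 : Tendsto (fun N : ℕ => ∑ n ∈ Finset.range N, ((1 - P) * P ^ n)) atTop (nhds 1) := by
      have heq : ∀ N : ℕ, ∑ n ∈ Finset.range N, ((1 - P) * P ^ n) = 1 - P ^ N := by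
        intro N
        have : ∀ n : ℕ, (1 - P) * P ^ n = P ^ n - P ^ (n + 1) := by
          intro n; rw [sub_mul, one_mul, ← pow_succ']
        simp_rw [this]
        rw [Finset.sum_range_sub' (fun n => P ^ n), pow_zero]
      simp_rw [heq]
      simpa using (tendsto_const_nhds (x := (1 : Matrix (Fin k) (Fin k) ℝ))).sub hpow0
    exact tendsto_nhds_unique h2 h3
  · intro i j
    have hev : Continuous fun M : Matrix (Fin k) (Fin k) ℝ => M i j := by
      have h1 : Continuous fun M : (Fin k → Fin k → ℝ) => M i j :=
        (continuous_apply j).comp (continuous_apply i)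
      exact h1
    have hQij : HasSum (fun N : ℕ => (P ^ N) i j) (Q i j) :=
      hQ.map (AddMonoidHom.mk' (fun M : Matrix (Fin k) (Fin k) ℝ => M i j)
        (fun _ _ => rfl)) hev
    exact hasSum_le (fun N => pow_entry_nonneg P hP N i j) hasSum_zero hQij

private lemma spectrum_shift {k : ℕ} (A : Matrix (Fin k) (Fin k) ℂ) (c : ℂ) (hc : c ≠ 0) (z : ℂ)
    (hz : z ∈ spectrum ℂ (1 + c • A)) : ∃ μ ∈ spectrum ℂ A, z = 1 + c * μ := by
  have h1 : (1 : Matrix (Fin k) (Fin k) ℂ) + c • A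
      = algebraMap ℂ (Matrix (Fin k) (Fin k) ℂ) 1 + c • A := by rw [_root_.map_one]
  rw [h1, ← spectrum.singleton_add_eq] at hz
  rw [Set.mem_add] at hz
  obtain ⟨a, ha, b, hb, hab⟩ := hz
  rw [Set.mem_singleton_iff] at ha
  rw [show c • A = (Units.mk0 c hc) • A from rfl, spectrum.unit_smul_eq_smul] at hb
  obtain ⟨μ, hμ, hμ2⟩ := hb
  exact ⟨μ, hμ, by rw [← hab, ha, ← hμ2]; rfl⟩

/-- For `A` Metzler Hurwitz and `B ≥ 0` entrywise with `B u0 > 0`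
for some `u0 ≥ 0`, the image of the nonnegative orthant under
`(x, u) ↦ Ax + Bu` is all of `ℝⁿ`. -/
theorem surjective_on_nonneg_orthant_of_metzler_hurwitz {n m : ℕ}
    (A : Matrix (Fin n) (Fin n) ℝ) (B : Matrix (Fin n) (Fin m) ℝ)
    (hMetzler : ∀ i j, i ≠ j → 0 ≤ A i j)
    (hHurwitz : ∀ μ ∈ spectrum ℂ (A.map (Complex.ofReal ·)), μ.re < 0)
    (hB : ∀ i j, 0 ≤ B i j)
    (hBu0 : ∃ u0 : Fin m → ℝ, (∀ j, 0 ≤ u0 j) ∧ ∀ i, 0 < B.mulVec u0 i) :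
    ∀ y : Fin n → ℝ, ∃ x : Fin n → ℝ, ∃ u : Fin m → ℝ,
      (∀ i, 0 ≤ x i) ∧ (∀ j, 0 ≤ u j) ∧ A.mulVec x + B.mulVec u = y := by
  rcases Nat.eq_zero_or_pos n with hn | hn
  · subst hn
    intro y
    exact ⟨0, 0, fun i => i.elim0, fun j => le_rfl, funext fun i => i.elim0⟩
  intro y
  haveI : NeZero n := ⟨hn.ne'⟩
  obtain ⟨u0, hu0, hw⟩ := hBu0
  set Ac : Matrix (Fin n) (Fin n) ℂ := A.map (Complex.ofReal ·) with hAc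
  -- choose α
  have hne : (spectrum ℂ Ac).Nonempty := spectrum.nonempty Ac
  set g : ℂ → ℝ := fun μ => ‖μ‖ ^ 2 / (-2 * μ.re) with hg
  have hgcont : ContinuousOn g (spectrum ℂ Ac) := by
    apply ContinuousOn.div
    · exact (continuous_norm.pow 2).continuousOn
    · exact (continuous_const.mul Complex.continuous_re).continuousOn
    · intro μ hμ
      have := hHurwitz μ hμ
      nlinarith
  obtain ⟨μ0, hμ0, hmax⟩ := (spectrum.isCompact Ac).exists_isMaxOn hne hgcont
  set D : ℝ := Finset.univ.sup' Finset.univ_nonempty (fun i : Fin n => -A i i) with hD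
  set α : ℝ := 1 + max 0 (max (g μ0) D) with hα
  have hα0 : 0 < α := by
    have := le_max_left (0:ℝ) (max (g μ0) D); rw [hα]; linarith
  have hαD : ∀ i, -A i i ≤ α := by
    intro i
    have h1 : -A i i ≤ D := by
      rw [hD]; exact Finset.le_sup' (fun i : Fin n => -A i i) (Finset.mem_univ i)
    have h2 : D ≤ max (g μ0) D := le_max_right _ _
    have h3 : max (g μ0) D ≤ max 0 (max (g μ0) D) := le_max_right _ _
    rw [hα]; linarith
  have hαg : ∀ μ ∈ spectrum ℂ Ac, g μ < α := by
    intro μ hμ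
    have h1 : g μ ≤ g μ0 := hmax hμ
    have h2 : g μ0 ≤ max (g μ0) D := le_max_left _ _
    have h3 : max (g μ0) D ≤ max 0 (max (g μ0) D) := le_max_right _ _
    rw [hα]; linarith
  -- P
  set P : Matrix (Fin n) (Fin n) ℝ := 1 + α⁻¹ • A with hP
  have hPent : ∀ i j, 0 ≤ P i j := by
    intro i j
    rw [hP]
    by_cases h : i = j
    · subst h
      simp only [Matrix.add_apply, Matrix.one_apply_eq, Matrix.smul_apply, smul_eq_mul]
      have h1 : -α ≤ A i i := by linarith [hαD i]
      have h2 : α⁻¹ * (-α) ≤ α⁻¹ * A i i :=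
        mul_le_mul_of_nonneg_left h1 (inv_nonneg.mpr hα0.le)
      have h3 : α⁻¹ * (-α) = -1 := by field_simp
      linarith
    · simp only [Matrix.add_apply, Matrix.one_apply_ne h, Matrix.smul_apply, smul_eq_mul]
      have := mul_nonneg (inv_nonneg.mpr hα0.le) (hMetzler i j h)
      linarith
  have hPcmap : P.map (Complex.ofReal ·) = 1 + ((α : ℂ))⁻¹ • Ac := by
    ext i j
    by_cases h : i = j <;>
      simp [hP, hAc, Matrix.map_apply, Matrix.add_apply, Matrix.smul_apply,
        Matrix.one_apply, h, smul_eq_mul] <;> push_cast <;> ring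
  have hspecP : ∀ z ∈ spectrum ℂ (P.map (Complex.ofReal ·)), ‖z‖₊ < 1 := by
    intro z hz
    rw [hPcmap] at hz
    have hcne : ((α : ℂ))⁻¹ ≠ 0 := by
      simp only [ne_eq, inv_eq_zero, Complex.ofReal_eq_zero]
      exact hα0.ne'
    obtain ⟨μ, hμ, hzμ⟩ := spectrum_shift Ac _ hcne z hz
    have hre : μ.re < 0 := hHurwitz μ hμ
    have hgμ : ‖μ‖ ^ 2 < α * (-2 * μ.re) := by
      have := hαg μ hμ
      rw [hg] at this
      exact (div_lt_iff₀ (by nlinarith)).mp this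
    have hnormsq : ‖μ‖ ^ 2 = μ.re ^ 2 + μ.im ^ 2 := by
      rw [Complex.sq_norm, Complex.normSq_apply]; ring
    set t : ℝ := α⁻¹ with htdef
    have ht0 : 0 < t := inv_pos.mpr hα0
    have htα : t * α = 1 := inv_mul_cancel₀ hα0.ne'
    have hzre : z.re = 1 + t * μ.re := by
      rw [hzμ]
      simp [← Complex.ofReal_inv, Complex.add_re, Complex.mul_re, htdef]
    have hzim : z.im = t * μ.im := by
      rw [hzμ]
      simp [← Complex.ofReal_inv, Complex.add_im, Complex.mul_im, htdef]
    have hz2 : ‖z‖ ^ 2 = (1 + t * μ.re) ^ 2 + (t * μ.im) ^ 2 := by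
      rw [Complex.sq_norm, Complex.normSq_apply, hzre, hzim]; ring
    have hzn : ‖z‖ < 1 := by
      have hsq : ‖z‖ ^ 2 < 1 := by
        rw [hnormsq] at hgμ
        have h4 := mul_lt_mul_of_pos_left hgμ (mul_pos ht0 ht0)
        have h5 : t * t * (α * (-2 * μ.re)) = -2 * (t * μ.re) := by
          calc t * t * (α * (-2 * μ.re)) = (t * α) * (t * (-2 * μ.re)) := by ring
            _ = -2 * (t * μ.re) := by rw [htα]; ring
        rw [hz2]
        nlinarith [h4, h5]
      nlinarith [norm_nonneg z]
    exact_mod_cast hzn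
  obtain ⟨Q, hQinv, hQnn⟩ := geom_inverse hn P hPent hspecP
  -- A * Q = -(α • 1)
  have hAQ : A * Q = α • (-1 : Matrix (Fin n) (Fin n) ℝ) := by
    have h1 : (1 : Matrix (Fin n) (Fin n) ℝ) - P = -(α⁻¹ • A) := by
      rw [hP]; abel
    rw [h1, neg_mul, Matrix.smul_mul] at hQinv
    have h2 : α⁻¹ • (A * Q) = -1 := neg_eq_iff_eq_neg.mp hQinv
    calc A * Q = α • (α⁻¹ • (A * Q)) := by
          rw [smul_smul, mul_inv_cancel₀ hα0.ne', one_smul]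
      _ = α • (-1 : Matrix (Fin n) (Fin n) ℝ) := by rw [h2]
  -- choose t scaling
  set w : Fin n → ℝ := B.mulVec u0 with hwdef
  set T : ℝ := Finset.univ.sup' Finset.univ_nonempty (fun i : Fin n => max 0 (y i / w i))
    with hT
  have hT0 : 0 ≤ T := by
    obtain ⟨i⟩ := (inferInstance : Nonempty (Fin n))
    refine le_trans (le_max_left 0 (y i / w i)) ?_
    rw [hT]
    exact Finset.le_sup' (fun i : Fin n => max 0 (y i / w i)) (Finset.mem_univ i)
  have hTy : ∀ i, y i ≤ T * w i := by
    intro i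
    have h1 : y i / w i ≤ T := by
      refine le_trans (le_max_right 0 (y i / w i)) ?_
      rw [hT]
      exact Finset.le_sup' (fun i : Fin n => max 0 (y i / w i)) (Finset.mem_univ i)
    exact (div_le_iff₀ (hw i)).mp h1
  set v : Fin n → ℝ := fun i => T * w i - y i with hv
  have hv0 : ∀ i, 0 ≤ v i := fun i => by simp [hv]; linarith [hTy i]
  refine ⟨α⁻¹ • Q.mulVec v, T • u0, ?_, ?_, ?_⟩
  · intro i
    have : Q.mulVec v i = ∑ j, Q i j * v j := by
      simp [Matrix.mulVec, dotProduct]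
    simp only [Pi.smul_apply, smul_eq_mul]
    refine mul_nonneg (inv_nonneg.mpr hα0.le) ?_
    rw [this]
    exact Finset.sum_nonneg fun j _ => mul_nonneg (hQnn i j) (hv0 j)
  · intro j
    simp only [Pi.smul_apply, smul_eq_mul]
    exact mul_nonneg hT0 (hu0 j)
  · have hBu : B.mulVec (T • u0) = T • w := by
      rw [hwdef, Matrix.mulVec_smul]
    have hAx : A.mulVec (α⁻¹ • Q.mulVec v) = -v := by
      rw [Matrix.mulVec_smul, Matrix.mulVec_mulVec, hAQ,
        Matrix.smul_mulVec, smul_smul, inv_mul_cancel₀ hα0.ne', one_smul,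
        Matrix.neg_mulVec, Matrix.one_mulVec]
    rw [hAx, hBu]
    funext i
    simp [hv, Pi.smul_apply, smul_eq_mul]
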